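/- Let a > 0, γ > 1, φ_{a,γ}(v) = 2^γ·(1 + e^{a v})^{−γ}, and for α ∈ (0,1) define D_α(v) = α·φ_{a,γ}(v) + (1−α)·φ_{a,γ}(−v). Set v* = (1/(a(γ−1)))·log(α/(1−α)). Then D_α'(v*) = 0, D_α'(v) < 0 for all v < v*, and D_α'(v) > 0 for all v > v*; consequently v* is the unique critical point of D_α and D_α attains its strict global minimum over ℝ at v*. -/

import Mathlib

/-- The γ-robust loss φ_{a,γ}(v) = 2^γ·(1 + e^{a v})^{−γ}. -/
noncomputable def gammaRobust (a γ : ℝ) (v : ℝ) : ℝ :=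
  (2:ℝ) ^ γ * (1 + Real.exp (a * v)) ^ (-γ)

open Real

lemma keyIdent (γ u : ℝ) :
    (1 + exp (-u)) ^ (-γ - 1) * exp (-u) = exp (γ * u) * (1 + exp u) ^ (-γ - 1) := by
  have h1 : (1:ℝ) + exp (-u) = exp (-u) * (1 + exp u) := by
    rw [Real.exp_neg]
    have := (Real.exp_pos u).ne'
    field_simp
    ring
  rw [h1, Real.mul_rpow (Real.exp_pos _).le (by positivity),
    Real.rpow_def_of_pos (Real.exp_pos _), Real.log_exp, mul_right_comm, ← Real.exp_add]
  congr 1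
  ring

lemma hasDeriv_gamma (a γ v : ℝ) :
    HasDerivAt (gammaRobust a γ)
      ((2:ℝ) ^ γ * ((a * exp (a * v)) * (-γ) * (1 + exp (a * v)) ^ (-γ - 1))) v := by
  have h1 : HasDerivAt (fun v : ℝ => a * v) a v := by
    simpa using (hasDerivAt_id v).const_mul a
  have h2 : HasDerivAt (fun v : ℝ => 1 + exp (a * v)) (a * exp (a * v)) v := by
    simpa [mul_comm] using (h1.exp.const_add 1)
  have h3 := h2.rpow_const (p := -γ) (Or.inl (by positivity))
  exact (h3.const_mul ((2:ℝ) ^ γ)).congr_deriv (by ring)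

theorem stmt5 (a γ : ℝ) (ha : 0 < a) (hγ : 1 < γ)
    (α : ℝ) (hα : α ∈ Set.Ioo (0:ℝ) 1)
    (D : ℝ → ℝ) (hD : ∀ v : ℝ, D v = α * gammaRobust a γ v + (1 - α) * gammaRobust a γ (-v))
    (vstar : ℝ) (hv : vstar = (1 / (a * (γ - 1))) * Real.log (α / (1 - α))) :
    deriv D vstar = 0 ∧
    (∀ v : ℝ, v < vstar → deriv D v < 0) ∧
    (∀ v : ℝ, vstar < v → 0 < deriv D v) ∧
    (∀ v : ℝ, deriv D v = 0 → v = vstar) ∧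
    (∀ v : ℝ, v ≠ vstar → D vstar < D v) := by
  obtain ⟨hα0, hα1⟩ := hα
  have hα1' : 0 < 1 - α := by linarith
  have hγ0 : 0 < γ := by linarith
  have hDe : D = fun v => α * gammaRobust a γ v + (1 - α) * gammaRobust a γ (-v) :=
    funext hD
  subst hDe
  -- Derivative of D
  have hder : ∀ v : ℝ, HasDerivAt (fun v => α * gammaRobust a γ v + (1 - α) * gammaRobust a γ (-v))
      (a * γ * (2:ℝ) ^ γ * (exp (a * v) * (1 + exp (a * v)) ^ (-γ - 1)) *
        ((1 - α) * exp (a * v * (γ - 1)) - α)) v := by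
    intro v
    have h1 := (hasDeriv_gamma a γ v).const_mul α
    have hneg : HasDerivAt (fun v : ℝ => -v) (-1) v := by
      exact hasDerivAt_neg v
    have h2 := ((hasDeriv_gamma a γ (-v)).comp v hneg).const_mul (1 - α)
    have h := h1.add h2
    refine h.congr_deriv ?_
    symm
    have hid := keyIdent γ (a * v)
    have he : exp (γ * (a * v)) = exp (a * v * (γ - 1)) * exp (a * v) := by
      rw [← Real.exp_add]; ring_nf
    rw [show a * -v = -(a * v) by ring]
    linear_combination (-((1 - α) * a * γ * (2:ℝ) ^ γ)) * hid +
      (-((1 - α) * a * γ * (2:ℝ) ^ γ * (1 + Real.exp (a * v)) ^ (-γ - 1))) * he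
  have hderiv : ∀ v : ℝ, deriv (fun v => α * gammaRobust a γ v + (1 - α) * gammaRobust a γ (-v)) v =
      (a * γ * (2:ℝ) ^ γ * (exp (a * v) * (1 + exp (a * v)) ^ (-γ - 1)) *
        ((1 - α) * exp (a * v * (γ - 1)) - α)) := fun v => (hder v).deriv
  set L := Real.log (α / (1 - α)) with hL
  have hexpL : (1 - α) * exp L = α := by
    rw [hL, Real.exp_log (by positivity)]
    field_simp
  have hvL : a * vstar * (γ - 1) = L := by
    have hne : a * (γ - 1) ≠ 0 := by
      have := mul_pos ha (by linarith : (0:ℝ) < γ - 1); linarith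
    have hg1 : γ - 1 ≠ 0 := (by linarith : (0:ℝ) < γ - 1).ne'
    rw [hv]; field_simp
  have hC : ∀ v : ℝ, 0 < a * γ * (2:ℝ) ^ γ * (exp (a * v) * (1 + exp (a * v)) ^ (-γ - 1)) := by
    intro v
    have : (0:ℝ) < (2:ℝ) ^ γ := by positivity
    have : (0:ℝ) < (1 + exp (a * v)) ^ (-γ - 1) :=
      Real.rpow_pos_of_pos (by positivity) _
    positivity
  -- sign of the factor
  have hS : ∀ v : ℝ, ((1 - α) * exp (a * v * (γ - 1)) - α) =
      (1 - α) * (exp (a * v * (γ - 1)) - exp L) := by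
    intro v; linear_combination hexpL
  have hfac : ∀ v : ℝ, v < vstar → (1 - α) * exp (a * v * (γ - 1)) - α < 0 := by
    intro v hvlt
    rw [hS]
    have : a * v * (γ - 1) < L := by
      rw [← hvL]
      have := mul_pos ha (by linarith : (0:ℝ) < γ - 1)
      nlinarith
    have := Real.exp_lt_exp.mpr this
    nlinarith
  have hfac' : ∀ v : ℝ, vstar < v → 0 < (1 - α) * exp (a * v * (γ - 1)) - α := by
    intro v hvlt
    rw [hS]
    have : L < a * v * (γ - 1) := by
      rw [← hvL]
      have := mul_pos ha (by linarith : (0:ℝ) < γ - 1)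
      nlinarith
    have := Real.exp_lt_exp.mpr this
    nlinarith
  have hzero : deriv (fun v => α * gammaRobust a γ v + (1 - α) * gammaRobust a γ (-v)) vstar = 0 := by
    rw [hderiv]
    rw [hS, hvL]
    simp
  have hneg' : ∀ v : ℝ, v < vstar →
      deriv (fun v => α * gammaRobust a γ v + (1 - α) * gammaRobust a γ (-v)) v < 0 := by
    intro v hvlt
    rw [hderiv]
    exact mul_neg_of_pos_of_neg (hC v) (hfac v hvlt)
  have hpos' : ∀ v : ℝ, vstar < v →
      0 < deriv (fun v => α * gammaRobust a γ v + (1 - α) * gammaRobust a γ (-v)) v := by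
    intro v hvlt
    rw [hderiv]
    exact mul_pos (hC v) (hfac' v hvlt)
  refine ⟨hzero, hneg', hpos', ?_, ?_⟩
  · intro v h0
    rcases lt_trichotomy v vstar with h | h | h
    · exact absurd h0 (ne_of_lt (hneg' v h))
    · exact h
    · exact absurd h0 (ne_of_gt (hpos' v h))
  · intro v hne
    have hdiff : Differentiable ℝ (fun v => α * gammaRobust a γ v + (1 - α) * gammaRobust a γ (-v)) :=
      fun v => (hder v).differentiableAt
    rcases hne.lt_or_gt with h | h
    · have hanti : StrictAntiOn (fun v => α * gammaRobust a γ v + (1 - α) * gammaRobust a γ (-v)) (Set.Iic vstar) := by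
        apply strictAntiOn_of_deriv_neg (convex_Iic _) hdiff.continuous.continuousOn
        intro x hx
        rw [interior_Iic] at hx
        exact hneg' x hx
      exact hanti (le_of_lt h) (le_refl vstar) h
    · have hmono : StrictMonoOn (fun v => α * gammaRobust a γ v + (1 - α) * gammaRobust a γ (-v)) (Set.Ici vstar) := by
        apply strictMonoOn_of_deriv_pos (convex_Ici _) hdiff.continuous.continuousOn
        intro x hx
        rw [interior_Ici] at hx
        exact hpos' x hx
      exact hmono (le_refl vstar) (le_of_lt h) h
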